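/- Under the hypotheses of the main theorem, if ‖x − x*‖ < min{ν, κ}, then F'(x)*F'(x) is invertible and ‖F'(x)†‖ ≤ β / |f'(‖x − x*‖)|. -/

import Mathlib

/-- Moore–Penrose inverse of an injective closed-range operator: A† = (A*A)⁻¹ A*. -/
noncomputable def pinv {X Y : Type*} [NormedAddCommGroup X] [InnerProductSpace ℝ X]
    [CompleteSpace X] [NormedAddCommGroup Y] [InnerProductSpace ℝ Y] [CompleteSpace Y]
    (A : X →L[ℝ] Y) : Y →L[ℝ] X :=
  (Ring.inverse ((ContinuousLinearMap.adjoint A).comp A)).comp (ContinuousLinearMap.adjoint A)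
section Aux
open ContinuousLinearMap
variable {X Y : Type*} [NormedAddCommGroup X] [InnerProductSpace ℝ X] [CompleteSpace X]
  [NormedAddCommGroup Y] [InnerProductSpace ℝ Y] [CompleteSpace Y]

lemma boundedBelow_of_inj_closedRange (A : X →L[ℝ] Y)
    (hinj : Function.Injective A) (hcl : IsClosed (Set.range (A : X → Y))) :
    ∃ c > 0, ∀ u, c * ‖u‖ ≤ ‖A u‖ := by
  set S : Submodule ℝ Y := A.range with hS
  have hScl : IsClosed (S : Set Y) := by
    rw [hS]
    have : (A.range : Set Y) = Set.range (A : X → Y) := by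
      ext y; simp [LinearMap.mem_range]
    rw [this]; exact hcl
  haveI : CompleteSpace S := hScl.completeSpace_coe
  set A' : X →L[ℝ] S := A.codRestrict S (fun u => A.mem_range_self u) with hA'
  have hker : A'.ker = ⊥ := by
    rw [hA', ContinuousLinearMap.ker_codRestrict]
    exact LinearMap.ker_eq_bot.mpr hinj
  have hrange : A'.range = ⊤ := by
    rw [Submodule.eq_top_iff']
    rintro ⟨y, hy⟩
    obtain ⟨u, hu⟩ := hy
    exact ⟨u, by ext; simpa [hA'] using hu⟩
  let e := ContinuousLinearEquiv.ofBijective A' hker hrange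
  refine ⟨(‖(e.symm : S →L[ℝ] X)‖ + 1)⁻¹, by positivity, fun u => ?_⟩
  have h1 : ‖u‖ ≤ (‖(e.symm : S →L[ℝ] X)‖ + 1) * ‖A u‖ := by
    have : u = e.symm (e u) := (e.symm_apply_apply u).symm
    have h2 : ‖u‖ ≤ ‖(e.symm : S →L[ℝ] X)‖ * ‖e u‖ := by
      calc ‖u‖ = ‖e.symm (e u)‖ := by rw [e.symm_apply_apply]
        _ ≤ ‖(e.symm : S →L[ℝ] X)‖ * ‖e u‖ := (e.symm : S →L[ℝ] X).le_opNorm _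
    have h3 : ‖e u‖ = ‖A u‖ := by
      have : (e u : Y) = A u := by
        simp [e, ContinuousLinearEquiv.ofBijective, hA']
      rw [← this]; rfl
    rw [h3] at h2
    nlinarith [norm_nonneg (A u)]
  rw [inv_mul_le_iff₀ (by positivity)]
  linarith

lemma isUnit_of_boundedBelow (A : X →L[ℝ] Y) {c : ℝ} (hc : 0 < c)
    (hb : ∀ u, c * ‖u‖ ≤ ‖A u‖) :
    IsUnit ((ContinuousLinearMap.adjoint A).comp A) := by
  set G : X →L[ℝ] X := (ContinuousLinearMap.adjoint A).comp A with hG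
  have hGu : ∀ u, (inner ℝ (G u) u : ℝ) = ‖A u‖ ^ 2 := by
    intro u
    rw [hG]
    rw [ContinuousLinearMap.comp_apply, ContinuousLinearMap.adjoint_inner_left]
    exact real_inner_self_eq_norm_sq (A u)
  have hAinj : ∀ u, A u = 0 → u = 0 := by
    intro u hu
    have := hb u
    rw [hu, norm_zero] at this
    have : ‖u‖ ≤ 0 := nonpos_of_mul_nonpos_right (by linarith) hc
    simpa using le_antisymm this (norm_nonneg u)
  have hGb : ∀ u, c ^ 2 * ‖u‖ ≤ ‖G u‖ := by
    intro u
    rcases eq_or_ne u 0 with rfl | hu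
    · simp
    have h1 : (c * ‖u‖) ^ 2 ≤ ‖A u‖ ^ 2 :=
      pow_le_pow_left₀ (by positivity) (hb u) 2
    have h2 : ‖A u‖ ^ 2 ≤ ‖G u‖ * ‖u‖ := by
      rw [← hGu u]
      exact real_inner_le_norm _ _
    have hun : 0 < ‖u‖ := norm_pos_iff.mpr hu
    have : c ^ 2 * ‖u‖ * ‖u‖ ≤ ‖G u‖ * ‖u‖ := by nlinarith
    exact le_of_mul_le_mul_right this hun
  have hker : G.ker = ⊥ := by
    rw [LinearMap.ker_eq_bot']
    intro u hu
    replace hu : G u = 0 := hu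
    have := hGb u
    rw [hu, norm_zero] at this
    have : ‖u‖ ≤ 0 := nonpos_of_mul_nonpos_right this (pow_pos hc 2)
    simpa using le_antisymm this (norm_nonneg u)
  have hGcl : IsClosed (Set.range (G : X → X)) := by
    have halip : AntilipschitzWith (Real.toNNReal (c ^ 2)⁻¹) G := by
      apply ContinuousLinearMap.antilipschitz_of_bound
      intro u
      rw [Real.coe_toNNReal _ (by positivity)]
      have hc2 : (0:ℝ) < c ^ 2 := pow_pos hc 2
      rw [inv_mul_eq_div, le_div_iff₀ hc2]
      nlinarith [hGb u]
    exact halip.isClosed_range G.uniformContinuous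
  have hScl : IsClosed ((G.range : Submodule ℝ X) : Set X) := by
    have : ((G.range : Submodule ℝ X) : Set X) = Set.range (G : X → X) := by
      ext y; simp [LinearMap.mem_range]
    rw [this]; exact hGcl
  haveI : CompleteSpace (G.range : Submodule ℝ X) := hScl.completeSpace_coe
  have hrange : G.range = ⊤ := by
    rw [← Submodule.orthogonal_eq_bot_iff]
    rw [Submodule.eq_bot_iff]
    intro v hv
    have h0 : (inner ℝ (G v) v : ℝ) = 0 := by
      exact hv (G v) (G.mem_range_self v)
    rw [hGu v] at h0
    have : A v = 0 := by
      have := sq_eq_zero_iff.mp h0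
      simpa using this
    exact hAinj v this
  let e := ContinuousLinearEquiv.ofBijective G hker hrange
  refine ⟨⟨G, (e.symm : X →L[ℝ] X), ?_, ?_⟩, rfl⟩
  · ext u
    have : G ((e.symm : X →L[ℝ] X) u) = e (e.symm u) := by
      rw [← ContinuousLinearEquiv.coe_ofBijective G hker hrange]; rfl
    simp only [ContinuousLinearMap.mul_apply, ContinuousLinearMap.one_apply]
    rw [this, e.apply_symm_apply]
  · ext u
    have : (e.symm : X →L[ℝ] X) (G u) = e.symm (e u) := by
      rw [← ContinuousLinearEquiv.coe_ofBijective G hker hrange]; rfl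
    simp only [ContinuousLinearMap.mul_apply, ContinuousLinearMap.one_apply]
    rw [this, e.symm_apply_apply]

lemma pinv_comp_self (A : X →L[ℝ] Y)
    (h : IsUnit ((ContinuousLinearMap.adjoint A).comp A)) (u : X) :
    pinv A (A u) = u := by
  have : pinv A (A u)
      = (Ring.inverse ((ContinuousLinearMap.adjoint A).comp A)
          * ((ContinuousLinearMap.adjoint A).comp A)) u := rfl
  rw [this, Ring.inverse_mul_cancel _ h, ContinuousLinearMap.one_apply]

lemma pinv_norm_le_of_boundedBelow (A : X →L[ℝ] Y) {c : ℝ} (hc : 0 < c)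
    (hb : ∀ u, c * ‖u‖ ≤ ‖A u‖) : ‖pinv A‖ ≤ 1 / c := by
  have hU := isUnit_of_boundedBelow A hc hb
  apply ContinuousLinearMap.opNorm_le_bound _ (by positivity)
  intro y
  set G : X →L[ℝ] X := (ContinuousLinearMap.adjoint A).comp A with hG
  set u : X := pinv A y with hu
  have hGu : G u = ContinuousLinearMap.adjoint A y := by
    have : G u = (G * Ring.inverse G) (ContinuousLinearMap.adjoint A y) := rfl
    rw [this, Ring.mul_inverse_cancel _ hU, ContinuousLinearMap.one_apply]
  have hAu : ‖A u‖ ≤ ‖y‖ := by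
    rcases le_or_gt ‖A u‖ 0 with h | h
    · exact h.trans (norm_nonneg y)
    have h1 : ‖A u‖ ^ 2 = (inner ℝ (G u) u : ℝ) := by
      rw [hG, ContinuousLinearMap.comp_apply, ContinuousLinearMap.adjoint_inner_left]
      exact (real_inner_self_eq_norm_sq (A u)).symm
    have h2 : (inner ℝ (G u) u : ℝ) = (inner ℝ y (A u) : ℝ) := by
      rw [hGu, ContinuousLinearMap.adjoint_inner_left]
    have h3 : (inner ℝ y (A u) : ℝ) ≤ ‖y‖ * ‖A u‖ := real_inner_le_norm _ _
    nlinarith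
  have := hb u
  have : c * ‖u‖ ≤ ‖y‖ := le_trans this hAu
  rw [div_mul_eq_mul_div, le_div_iff₀ hc]
  linarith
end Aux


theorem stmt9
    {X Y : Type*} [NormedAddCommGroup X] [InnerProductSpace ℝ X] [CompleteSpace X]
    [NormedAddCommGroup Y] [InnerProductSpace ℝ Y] [CompleteSpace Y]
    (Ω : Set X) (hΩ : IsOpen Ω) (F : X → Y) (Fp : X → X →L[ℝ] Y)
    (hF : ∀ x ∈ Ω, HasFDerivAt F (Fp x) x)
    (hclosed : ∀ x ∈ Ω, IsClosed (Set.range ((Fp x) : X → Y)))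
    (xs : X) (hxs : xs ∈ Ω) (hFxs : F xs = 0) (hinj : Function.Injective ((Fp xs) : X → Y))
    (R : ℝ) (hR : 0 < R)
    (β κ : ℝ) (hβ : β = ‖pinv (Fp xs)‖)
    (hκ : κ = sSup {t ∈ Set.Ico 0 R | Metric.ball xs t ⊆ Ω})
    (f fp : ℝ → ℝ)
    (hderiv : ∀ t ∈ Set.Ico (0:ℝ) R, HasDerivWithinAt f (fp t) (Set.Ico 0 R) t)
    (hcont : ContinuousOn fp (Set.Ico 0 R))
    (hmaj : ∀ τ ∈ Set.Icc (0:ℝ) 1, ∀ x ∈ Metric.ball xs κ,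
      β * ‖Fp x - Fp (xs + τ • (x - xs))‖ ≤ fp ‖x - xs‖ - fp (τ * ‖x - xs‖))
    (hf0 : f 0 = 0) (hfp0 : fp 0 = -1) (hmono : StrictMonoOn fp (Set.Ico 0 R))
    (ν : ℝ) (hν : ν = sSup {t ∈ Set.Ico 0 R | fp t < 0})
    (x : X) (hx : ‖x - xs‖ < min ν κ) :
    IsUnit ((ContinuousLinearMap.adjoint (Fp x)).comp (Fp x)) ∧
      ‖pinv (Fp x)‖ ≤ β / |fp ‖x - xs‖| := by
  set t := ‖x - xs‖ with ht
  have ht0 : 0 ≤ t := norm_nonneg _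
  have htν : t < ν := lt_of_lt_of_le hx (min_le_left _ _)
  have htκ : t < κ := lt_of_lt_of_le hx (min_le_right _ _)
  have hfpt : fp t < 0 := by
    have hne : ({s ∈ Set.Ico (0:ℝ) R | fp s < 0}).Nonempty :=
      ⟨0, ⟨⟨le_refl 0, hR⟩, by rw [hfp0]; norm_num⟩⟩
    obtain ⟨s, hs, hts⟩ := exists_lt_of_lt_csSup hne (hν ▸ htν)
    have h1 : t ∈ Set.Ico (0:ℝ) R := ⟨ht0, lt_trans hts hs.1.2⟩
    calc fp t < fp s := hmono h1 hs.1 hts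
      _ < 0 := hs.2
  have habs : |fp t| = -fp t := abs_of_neg hfpt
  have habspos : 0 < |fp t| := abs_pos.mpr (ne_of_lt hfpt)
  have hxball : x ∈ Metric.ball xs κ := by
    rw [Metric.mem_ball, dist_eq_norm]; exact htκ
  have hmaj0 : β * ‖Fp x - Fp xs‖ ≤ fp t + 1 := by
    have := hmaj 0 ⟨le_refl 0, zero_le_one⟩ x hxball
    simpa [hfp0] using this
  set A := Fp xs with hA
  set B := Fp x with hB
  obtain ⟨c0, hc0, hbA⟩ := boundedBelow_of_inj_closedRange A hinj (hclosed xs hxs)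
  have hUA : IsUnit ((ContinuousLinearMap.adjoint A).comp A) :=
    isUnit_of_boundedBelow A hc0 hbA
  have hβA : ∀ u, ‖u‖ ≤ β * ‖A u‖ := by
    intro u
    calc ‖u‖ = ‖pinv A (A u)‖ := by rw [pinv_comp_self A hUA u]
      _ ≤ ‖pinv A‖ * ‖A u‖ := (pinv A).le_opNorm _
      _ = β * ‖A u‖ := by rw [hβ]
  have hβ0 : 0 ≤ β := hβ ▸ norm_nonneg _
  have key : ∀ u, |fp t| * ‖u‖ ≤ β * ‖B u‖ := by
    intro u
    have h1 : ‖A u - B u‖ ≤ ‖B - A‖ * ‖u‖ := by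
      have h := (B - A).le_opNorm u
      rw [ContinuousLinearMap.sub_apply] at h
      calc ‖A u - B u‖ = ‖B u - A u‖ := norm_sub_rev _ _
        _ ≤ ‖B - A‖ * ‖u‖ := h
    have h2 : β * ‖B - A‖ ≤ fp t + 1 := hmaj0
    have h3 : ‖A u‖ ≤ ‖A u - B u‖ + ‖B u‖ := by
      conv_lhs => rw [← sub_add_cancel (A u) (B u)]
      exact norm_add_le _ _
    have e1 : β * ‖A u‖ ≤ β * (‖A u - B u‖ + ‖B u‖) := mul_le_mul_of_nonneg_left h3 hβ0
    have e2 : β * ‖A u - B u‖ ≤ β * (‖B - A‖ * ‖u‖) := mul_le_mul_of_nonneg_left h1 hβ0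
    have e3 : β * ‖B - A‖ * ‖u‖ ≤ (fp t + 1) * ‖u‖ := mul_le_mul_of_nonneg_right h2 (norm_nonneg u)
    have e4 := hβA u
    rw [habs]
    nlinarith [e1, e2, e3, e4]
  rcases eq_or_lt_of_le hβ0 with hb0 | hbpos
  · have hsub : ∀ u : X, u = 0 := by
      intro u
      have h := key u
      rw [← hb0, zero_mul] at h
      have h1 : ‖u‖ ≤ 0 := nonpos_of_mul_nonpos_right h habspos
      simpa using le_antisymm h1 (norm_nonneg u)
    haveI : Subsingleton X := ⟨fun a b => by rw [hsub a, hsub b]⟩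
    constructor
    · haveI : Subsingleton (X →L[ℝ] X) :=
        ⟨fun fo go => by ext u; rw [Subsingleton.elim u (0 : X)]; simp⟩
      exact isUnit_of_subsingleton _
    · have hz : pinv B = 0 := by
        ext y
        exact hsub _
      rw [hz, norm_zero]
      positivity
  · set c := |fp t| / β with hc
    have hcpos : 0 < c := div_pos habspos hbpos
    have hbB : ∀ u, c * ‖u‖ ≤ ‖B u‖ := by
      intro u
      rw [hc, div_mul_eq_mul_div, div_le_iff₀ hbpos]
      calc |fp t| * ‖u‖ ≤ β * ‖B u‖ := key u
        _ = ‖B u‖ * β := mul_comm _ _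
    refine ⟨isUnit_of_boundedBelow B hcpos hbB, ?_⟩
    have h := pinv_norm_le_of_boundedBelow B hcpos hbB
    rwa [hc, one_div_div] at h
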